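/- Every ordered context-free grammar in Chomsky normal form (in which every nonterminal is useful) is well-ordered: for every string w the set P_G(w) of parse trees is well-ordered under the lexicographic order ≺_G. -/

import Mathlib

namespace Ocfg

/-- A symbol: nonterminal or terminal. -/
inductive Sym (N T : Type) : Type
  | nt : N → Sym N T
  | tm : T → Sym N T

/-- An (ordered) context-free grammar: each nonterminal has an ordered
list of right-hand sides; `start` is the start nonterminal. -/
structure OCFG (N T : Type) : Type where
  prods : N → List (List (Sym N T))
  start : N

/-- Ordered ranked trees used as parse trees: terminal leaves, ε-leaves,
and internal nodes labelled by a nonterminal together with the index of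
the rule applied there. -/
inductive PTree (N T : Type) : Type
  | leaf : T → PTree N T
  | eps  : PTree N T
  | node : N → ℕ → List (PTree N T) → PTree N T

mutual
/-- `ParseFrom G A w t`: `t` is a parse tree with root nonterminal `A`
and yield `w`. -/
inductive ParseFrom {N T : Type} (G : OCFG N T) : N → List T → PTree N T → Prop
  | epsNode (A : N) (i : ℕ) :
      (G.prods A)[i]? = some [] →
      ParseFrom G A [] (PTree.node A i [PTree.eps])
  | node (A : N) (i : ℕ) (r : List (Sym N T)) (w : List T) (cs : List (PTree N T)) :
      (G.prods A)[i]? = some r → r ≠ [] → ParseSeq G r w cs →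
      ParseFrom G A w (PTree.node A i cs)

/-- `ParseSeq G r w cs`: the trees `cs` match, in order, the symbols of `r`,
with concatenated yield `w`. -/
inductive ParseSeq {N T : Type} (G : OCFG N T) : List (Sym N T) → List T → List (PTree N T) → Prop
  | nil : ParseSeq G [] [] []
  | consTm (a : T) (r : List (Sym N T)) (w : List T) (cs : List (PTree N T)) :
      ParseSeq G r w cs →
      ParseSeq G (Sym.tm a :: r) (a :: w) (PTree.leaf a :: cs)
  | consNt (A : N) (t : PTree N T) (wA : List T) (r : List (Sym N T)) (w : List T)
      (cs : List (PTree N T)) :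
      ParseFrom G A wA t → ParseSeq G r w cs →
      ParseSeq G (Sym.nt A :: r) (wA ++ w) (t :: cs)
end

/-- The set `P_G(w)` of parse trees of `w`. -/
def parseTrees {N T : Type} (G : OCFG N T) (w : List T) : Set (PTree N T) :=
  {t | ParseFrom G G.start w t}

/-- `n(t)`: the sequence of rule indices of `t`, in pre-order. -/
def PTree.idxSeq {N T : Type} : PTree N T → List ℕ
  | .leaf _ => []
  | .eps => []
  | .node _ i cs => i :: (cs.attach.map (fun c => PTree.idxSeq c.1)).flatten
decreasing_by
  have := List.sizeOf_lt_of_mem c.2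
  simp_wf
  omega

/-- The order `≺_G` on parse trees: lexicographic comparison of the
pre-order rule-index sequences. -/
def treeLT {N T : Type} (t₁ t₂ : PTree N T) : Prop :=
  List.Lex (· < ·) t₁.idxSeq t₂.idxSeq

/-- One-step derivation relation `⇒` of the underlying CFG. -/
def OCFG.Step {N T : Type} (G : OCFG N T) (u v : List (Sym N T)) : Prop :=
  ∃ (u₁ u₂ : List (Sym N T)) (A : N) (r : List (Sym N T)),
    r ∈ G.prods A ∧ u = u₁ ++ Sym.nt A :: u₂ ∧ v = u₁ ++ r ++ u₂

/-- `⇒*`. -/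
def OCFG.Derives {N T : Type} (G : OCFG N T) : List (Sym N T) → List (Sym N T) → Prop :=
  Relation.ReflTransGen G.Step

/-- A nonterminal is useful if it occurs in some sentential form derivable from
the start symbol and derives some terminal string. -/
def Useful {N T : Type} (G : OCFG N T) (A : N) : Prop :=
  (∃ u₁ u₂ : List (Sym N T), G.Derives [Sym.nt G.start] (u₁ ++ Sym.nt A :: u₂)) ∧
  (∃ w : List T, G.Derives [Sym.nt A] (w.map Sym.tm))

/-- `G` is cyclic if `A ⇒⁺ A` for some nonterminal `A`. -/
def Cyclic {N T : Type} (G : OCFG N T) : Prop :=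
  ∃ A : N, Relation.TransGen G.Step [Sym.nt A] [Sym.nt A]

/-- `G` has no ε-rules. -/
def NoEpsRules {N T : Type} (G : OCFG N T) : Prop :=
  ∀ (A : N) (r : List (Sym N T)), r ∈ G.prods A → r ≠ []

/-- A unit-rule step: `A → B` is a rule of `G`. -/
def UnitStep {N T : Type} (G : OCFG N T) (A B : N) : Prop :=
  [Sym.nt B] ∈ G.prods A

/-- `G` has a cycle of unit rules. -/
def HasUnitCycle {N T : Type} (G : OCFG N T) : Prop :=
  ∃ A : N, Relation.TransGen (UnitStep G) A A

/-- `G` is well-ordered: for every string `w`, every nonempty subset of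
`P_G(w)` has a `≺_G`-least element. -/
def WellOrderedG {N T : Type} (G : OCFG N T) : Prop :=
  ∀ (w : List T) (Φ : Set (PTree N T)), Φ ⊆ parseTrees G w → Φ.Nonempty →
    ∃ t ∈ Φ, ∀ t' ∈ Φ, t = t' ∨ treeLT t t'

/-- `t` is the `≺_G`-least parse tree of `w`. -/
def IsLeastTree {N T : Type} (G : OCFG N T) (w : List T) (t : PTree N T) : Prop :=
  ParseFrom G G.start w t ∧ ∀ t', ParseFrom G G.start w t' → t = t' ∨ treeLT t t'

/-- `G` has least parse trees. -/
def HasLeastTrees {N T : Type} (G : OCFG N T) : Prop :=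
  ∀ w : List T, (parseTrees G w).Nonempty → ∃ t, IsLeastTree G w t

/-- Derivations of a given length (number of steps). -/
inductive DerivesIn {N T : Type} (G : OCFG N T) : List (Sym N T) → List (Sym N T) → ℕ → Prop
  | refl (u : List (Sym N T)) : DerivesIn G u u 0
  | step (u v w : List (Sym N T)) (n : ℕ) :
      G.Step u v → DerivesIn G v w n → DerivesIn G u w (n + 1)

/-- Number of rule applications in a parse tree (= length of the
corresponding leftmost derivation). -/
def PTree.numRules {N T : Type} : PTree N T → ℕ
  | .leaf _ => 0
  | .eps => 0
  | .node _ _ cs => 1 + ((cs.attach.map (fun c => PTree.numRules c.1)).foldr (· + ·) 0)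
decreasing_by
  have := List.sizeOf_lt_of_mem c.2
  simp_wf
  omega

/-- Height of a tree: a single leaf has height 0. -/
def PTree.height {N T : Type} : PTree N T → ℕ
  | .leaf _ => 0
  | .eps => 0
  | .node _ _ cs => 1 + ((cs.attach.map (fun c => PTree.height c.1)).foldr max 0)
decreasing_by
  have := List.sizeOf_lt_of_mem c.2
  simp_wf
  omega

/-- The language of `G`. -/
def langOf {N T : Type} (G : OCFG N T) : Language T :=
  {w | ∃ t, ParseFrom G G.start w t}

end Ocfg

namespace Ocfg

/-- Chomsky normal form: every rule is of the form `A → B C` or `A → a`,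
except possibly `S → ε` where the start symbol `S` occurs on no right-hand side. -/
def ChomskyNF {N T : Type} (G : OCFG N T) : Prop :=
  ∀ (A : N) (r : List (Sym N T)), r ∈ G.prods A →
    (∃ B C : N, r = [Sym.nt B, Sym.nt C]) ∨ (∃ a : T, r = [Sym.tm a]) ∨
    (r = [] ∧ A = G.start ∧
      ∀ (B : N) (r' : List (Sym N T)), r' ∈ G.prods B → Sym.nt G.start ∉ r')

end Ocfg

namespace Ocfg

variable {N T : Type}

lemma idxSeq_node (A : N) (i : ℕ) (cs : List (PTree N T)) :
    (PTree.node A i cs).idxSeq = i :: (cs.map PTree.idxSeq).flatten := by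
  rw [PTree.idxSeq]
  congr 1
  congr 1
  exact List.attach_map_val (l := cs) (f := PTree.idxSeq)

lemma sizeOf_mem_lt_node (A : N) (i : ℕ) (cs : List (PTree N T)) (t : PTree N T)
    (h : t ∈ cs) : sizeOf t < sizeOf (PTree.node A i cs) := by
  have := List.sizeOf_lt_of_mem h
  simp only [PTree.node.sizeOf_spec]
  omega

lemma mem_of_getElem? {α : Type*} {l : List α} {i : ℕ} {a : α} (h : l[i]? = some a) :
    a ∈ l := by
  rw [List.getElem?_eq_some_iff] at h
  obtain ⟨hi, rfl⟩ := h
  exact List.getElem_mem hi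

lemma lt_length_of_getElem? {α : Type*} {l : List α} {i : ℕ} {a : α}
    (h : l[i]? = some a) : i < l.length := by
  rw [List.getElem?_eq_some_iff] at h
  exact h.1

/-- In CNF, the empty string can only be parsed from the start symbol, and
then the start symbol occurs on no right-hand side. -/
lemma eps_start (G : OCFG N T) (hcnf : ChomskyNF G) :
    ∀ (n : ℕ) (t : PTree N T) (A : N) (w : List T), sizeOf t ≤ n → ParseFrom G A w t →
      w = [] →
      A = G.start ∧ ∀ (B : N) (r' : List (Sym N T)), r' ∈ G.prods B → Sym.nt G.start ∉ r' := by
  intro n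
  induction n using Nat.strong_induction_on with
  | _ n ih =>
    intro t A w hsz h hw
    cases h with
    | epsNode A i hi =>
      rcases hcnf A [] (mem_of_getElem? hi) with ⟨B, C, hr⟩ | ⟨a, hr⟩ | ⟨_, h1, h2⟩
      · simp at hr
      · simp at hr
      · exact ⟨h1, h2⟩
    | node A i r w cs hi hne hseq =>
      rcases hcnf A r (mem_of_getElem? hi) with ⟨B, C, hr⟩ | ⟨a, hr⟩ | ⟨hr, _, _⟩
      · subst hr
        cases hseq with
        | consNt B t1 wB r' w' cs' h1 hseq2 =>
          have hwB : wB = [] := (List.append_eq_nil_iff.mp hw).1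
          have h1lt : sizeOf t1 < n :=
            lt_of_lt_of_le (sizeOf_mem_lt_node A i _ t1 List.mem_cons_self) hsz
          have := ih (sizeOf t1) h1lt t1 B wB le_rfl h1 hwB
          exact absurd (mem_of_getElem? hi)
            (by intro hmem
                have h2 := this.2 A _ hmem
                rw [this.1] at h2
                simp at h2)
      · subst hr hw
        cases hseq
      · exact absurd hr hne

/-- The index sequence of a parse tree determines the tree (prefix-code
property), among parse trees rooted at the same nonterminal. -/
lemma idx_unique (G : OCFG N T) (hcnf : ChomskyNF G) :
    ∀ (n : ℕ) (t t' : PTree N T) (A : N) (w w' : List T) (s s' : List ℕ),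
      sizeOf t ≤ n → ParseFrom G A w t → ParseFrom G A w' t' →
      t.idxSeq ++ s = t'.idxSeq ++ s' → t = t' ∧ s = s' := by
  intro n
  induction n using Nat.strong_induction_on with
  | _ n ih =>
    intro t t' A w w' s s' hsz h h' heq
    cases h with
    | epsNode A i hi =>
      cases h' with
      | epsNode A i' hi' =>
        simp only [idxSeq_node, List.map, PTree.idxSeq, List.flatten] at heq
        simp only [List.cons_append, List.nil_append, List.cons.injEq] at heq
        obtain ⟨rfl, rfl⟩ := heq
        exact ⟨rfl, rfl⟩
      | node A i' r' w2 cs' hi' hne' hseq' =>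
        simp only [idxSeq_node, List.map, PTree.idxSeq, List.flatten] at heq
        have hii : i = i' := by
          have := congrArg (fun l => l.head?) heq
          simpa using this
        subst hii
        rw [hi] at hi'
        exact absurd (Option.some.injEq _ _ ▸ hi').symm hne'
    | node A i r w1 cs hi hne hseq =>
      cases h' with
      | epsNode A i' hi' =>
        simp only [idxSeq_node, List.map, PTree.idxSeq, List.flatten] at heq
        have hii : i = i' := by
          have := congrArg (fun l => l.head?) heq
          simpa using this
        subst hii
        rw [hi] at hi'
        exact absurd (Option.some.injEq _ _ ▸ hi') hne
      | node A i' r' w2 cs' hi' hne' hseq' =>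
        have hii : i = i' := by
          have := congrArg (fun l => l.head?) heq
          simpa [idxSeq_node] using this
        subst hii
        rw [hi] at hi'
        have hrr : r = r' := Option.some.injEq _ _ ▸ hi'
        subst hrr
        rcases hcnf A r (mem_of_getElem? hi) with ⟨B, C, hr⟩ | ⟨a, hr⟩ | ⟨hr, _, _⟩
        · subst hr
          cases hseq with
          | consNt B t1 wB rr ww csr h1 hseq2 =>
          cases hseq2 with
          | consNt C t2 wC rr2 ww2 csr2 h2 hseq3 =>
          cases hseq3 with
          | nil =>
          cases hseq' with
          | consNt B t1' wB' rr' ww' csr' h1' hseq2' =>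
          cases hseq2' with
          | consNt C t2' wC' rr2' ww2' csr2' h2' hseq3' =>
          cases hseq3' with
          | nil =>
          simp only [idxSeq_node, List.map, List.flatten, List.append_eq, List.append_nil,
            List.cons_append, List.cons.injEq, List.append_assoc] at heq
          have h1sz : sizeOf t1 < n :=
            lt_of_lt_of_le (sizeOf_mem_lt_node A i [t1, t2] t1 (by simp)) hsz
          have h2sz : sizeOf t2 < n :=
            lt_of_lt_of_le (sizeOf_mem_lt_node A i [t1, t2] t2 (by simp)) hsz
          obtain ⟨rfl, heq2⟩ := ih (sizeOf t1) h1sz t1 t1' B wB wB'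
            (PTree.idxSeq t2 ++ s) (PTree.idxSeq t2' ++ s') le_rfl h1 h1' heq.2
          obtain ⟨rfl, rfl⟩ := ih (sizeOf t2) h2sz t2 t2' C wC wC' s s' le_rfl h2 h2' heq2
          exact ⟨rfl, rfl⟩
        · subst hr
          cases hseq with
          | consTm a rr ww csr hseq2 =>
          cases hseq2 with
          | nil =>
          cases hseq' with
          | consTm a rr' ww' csr' hseq2' =>
          cases hseq2' with
          | nil =>
          simp only [idxSeq_node, List.map, PTree.idxSeq, List.flatten, List.append_nil,
            List.cons_append, List.nil_append, List.cons.injEq] at heq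
          exact ⟨rfl, heq.2⟩
        · exact absurd hr hne

/-- Bounds on the index sequence of a parse tree of `w` in CNF. -/
lemma idx_bound (G : OCFG N T) (hcnf : ChomskyNF G) (Bnd : ℕ)
    (hB : ∀ A : N, (G.prods A).length ≤ Bnd) :
    ∀ (n : ℕ) (t : PTree N T) (A : N) (w : List T), sizeOf t ≤ n → ParseFrom G A w t →
      (1 ≤ w.length → t.idxSeq.length ≤ 2 * w.length - 1) ∧
      t.idxSeq.length ≤ 2 * w.length + 1 ∧
      ∀ j ∈ t.idxSeq, j < Bnd := by
  intro n
  induction n using Nat.strong_induction_on with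
  | _ n ih =>
    intro t A w hsz h
    cases h with
    | epsNode A i hi =>
      refine ⟨by simp, ?_, ?_⟩
      · simp [idxSeq_node, PTree.idxSeq]
      · intro j hj
        simp only [idxSeq_node, List.map, PTree.idxSeq, List.flatten, List.append_eq, List.append_nil,
          List.nil_append, List.mem_singleton] at hj
        subst hj
        exact lt_of_lt_of_le (lt_length_of_getElem? hi) (hB A)
    | node A i r w cs hi hne hseq =>
      rcases hcnf A r (mem_of_getElem? hi) with ⟨B, C, hr⟩ | ⟨a, hr⟩ | ⟨hr, _, _⟩
      · subst hr
        cases hseq with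
        | consNt B t1 wB rr ww csr h1 hseq2 =>
        cases hseq2 with
        | consNt C t2 wC rr2 ww2 csr2 h2 hseq3 =>
        cases hseq3 with
        | nil =>
        have h1sz : sizeOf t1 < n :=
          lt_of_lt_of_le (sizeOf_mem_lt_node A i [t1, t2] t1 (by simp)) hsz
        have h2sz : sizeOf t2 < n :=
          lt_of_lt_of_le (sizeOf_mem_lt_node A i [t1, t2] t2 (by simp)) hsz
        have ih1 := ih (sizeOf t1) h1sz t1 B wB le_rfl h1
        have ih2 := ih (sizeOf t2) h2sz t2 C wC le_rfl h2
        have hwB : wB ≠ [] := by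
          intro hnil
          subst hnil
          have := eps_start G hcnf (sizeOf t1) t1 B [] le_rfl h1 rfl
          have hmem := this.2 A _ (mem_of_getElem? hi)
          rw [this.1] at hmem
          simp at hmem
        have hwC : wC ≠ [] := by
          intro hnil
          subst hnil
          have := eps_start G hcnf (sizeOf t2) t2 C [] le_rfl h2 rfl
          have hmem := this.2 A _ (mem_of_getElem? hi)
          rw [this.1] at hmem
          simp at hmem
        have hB1 : 1 ≤ wB.length := List.length_pos_iff.mpr hwB
        have hC1 : 1 ≤ wC.length := List.length_pos_iff.mpr hwC
        have l1 := ih1.1 hB1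
        have l2 := ih2.1 hC1
        constructor
        · intro _
          simp only [idxSeq_node, List.map, List.flatten, List.append_eq, List.append_nil, List.length_cons,
            List.length_append]
          omega
        constructor
        · simp only [idxSeq_node, List.map, List.flatten, List.append_eq, List.append_nil, List.length_cons,
            List.length_append]
          omega
        · intro j hj
          simp only [idxSeq_node, List.map, List.flatten, List.append_eq, List.append_nil, List.mem_cons,
            List.mem_append] at hj
          rcases hj with rfl | hj | hj
          · exact lt_of_lt_of_le (lt_length_of_getElem? hi) (hB A)
          · exact ih1.2.2 j hj
          · exact ih2.2.2 j hj
      · subst hr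
        cases hseq with
        | consTm a rr ww csr hseq2 =>
        cases hseq2 with
        | nil =>
        refine ⟨?_, ?_, ?_⟩
        · intro _
          simp [idxSeq_node, PTree.idxSeq]
        · simp [idxSeq_node, PTree.idxSeq]
        · intro j hj
          simp only [idxSeq_node, List.map, PTree.idxSeq, List.flatten, List.append_eq, List.append_nil,
            List.nil_append, List.mem_singleton] at hj
          subst hj
          exact lt_of_lt_of_le (lt_length_of_getElem? hi) (hB A)
      · exact absurd hr hne

/-- Lists of bounded length with bounded entries form a finite set. -/
lemma finite_bdd : ∀ (L Bnd : ℕ), {l : List ℕ | l.length ≤ L ∧ ∀ x ∈ l, x < Bnd}.Finite := by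
  intro L Bnd
  induction L with
  | zero =>
    apply Set.Finite.subset (Set.finite_singleton ([] : List ℕ))
    rintro l ⟨h1, _⟩
    simp [List.length_eq_zero_iff.mp (Nat.le_zero.mp h1)]
  | succ L ihL =>
    apply Set.Finite.subset
      (Set.Finite.insert [] (Set.Finite.image2 List.cons (Set.finite_Iio Bnd) ihL))
    rintro l ⟨h1, h2⟩
    cases l with
    | nil => exact Set.mem_insert _ _
    | cons x xs =>
      refine Set.mem_insert_of_mem _ (Set.mem_image2.mpr ⟨x, ?_, xs, ⟨?_, ?_⟩, rfl⟩)
      · exact h2 x List.mem_cons_self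
      · simpa using Nat.le_of_succ_le_succ h1
      · intro y hy
        exact h2 y (List.mem_cons_of_mem _ hy)

end Ocfg

open Ocfg

/-- Every oCFG in Chomsky normal form (with all nonterminals
useful) is well-ordered. -/
theorem stmt4 {N T : Type} [Fintype N] [Fintype T] (G : OCFG N T)
    (hcnf : ChomskyNF G) (huseful : ∀ A : N, Useful G A) :
    WellOrderedG G := by
  classical
  intro w Phi hsub hne
  set Bnd : ℕ := Finset.univ.sup (fun A : N => (G.prods A).length) with hBnd
  have hB : ∀ A : N, (G.prods A).length ≤ Bnd :=
    fun A => Finset.le_sup (f := fun A : N => (G.prods A).length) (Finset.mem_univ A)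
  set S : Set (List ℕ) := PTree.idxSeq '' Phi with hS
  have hSfin : S.Finite := by
    apply Set.Finite.subset (finite_bdd (2 * w.length + 1) Bnd)
    rintro l ⟨t, htP, rfl⟩
    have hp : ParseFrom G G.start w t := hsub htP
    have := idx_bound G hcnf Bnd hB (sizeOf t) t G.start w le_rfl hp
    exact ⟨this.2.1, this.2.2⟩
  obtain ⟨m, hmS, hmin⟩ := Set.exists_min_image S id hSfin (hne.image _)
  obtain ⟨t, htP, rfl⟩ := hmS
  refine ⟨t, htP, ?_⟩
  intro t' ht'P
  have hle : t.idxSeq ≤ t'.idxSeq := hmin _ ⟨t', ht'P, rfl⟩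
  rcases lt_or_eq_of_le hle with hlt | heq
  · exact Or.inr hlt
  · left
    have h1 : ParseFrom G G.start w t := hsub htP
    have h2 : ParseFrom G G.start w t' := hsub ht'P
    have := idx_unique G hcnf (sizeOf t) t t' G.start w w [] [] le_rfl h1 h2
      (by rw [List.append_nil, List.append_nil, heq])
    exact this.1
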